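/- Let H be a finite-dimensional real inner product space, let x, x_1,…,x_n ∈ H and λ > 0, and let V = λI + Σ_{i=1}^n x_i x_iᵀ (a positive definite, hence invertible, self-adjoint linear map on H). Then the increment of information gain satisfies Δγ(λ; x | {x_1,…,x_n}) = log(1 + ⟪x, V⁻¹ x⟫). -/

import Mathlib

open scoped RealInnerProductSpace BigOperators

/-- Gram matrix `(K_T)_{ij} = ⟪x_i, x_j⟫` of a tuple of points. -/
noncomputable def gram {H : Type*} [NormedAddCommGroup H] [InnerProductSpace ℝ H]
    {T : ℕ} (x : Fin T → H) : Matrix (Fin T) (Fin T) ℝ :=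
  Matrix.of fun i j => ⟪x i, x j⟫

/-- Information gain `γ(λ; x_1,…,x_T) = log det (I + λ⁻¹ K_T)`. -/
noncomputable def infoGain {H : Type*} [NormedAddCommGroup H] [InnerProductSpace ℝ H]
    (lam : ℝ) {T : ℕ} (x : Fin T → H) : ℝ :=
  Real.log (1 + lam⁻¹ • gram x).det

/-- Increment of information gain `Δγ(λ; x | x_1,…,x_n)`. -/
noncomputable def incrGain {H : Type*} [NormedAddCommGroup H] [InnerProductSpace ℝ H]
    (lam : ℝ) (x : H) {n : ℕ} (xs : Fin n → H) : ℝ :=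
  infoGain lam (Fin.cons x xs) - infoGain lam xs

/-- The rank-one self-adjoint map `x xᵀ : v ↦ ⟪x, v⟫ • x`. -/
noncomputable def outer {H : Type*} [NormedAddCommGroup H] [InnerProductSpace ℝ H]
    (x : H) : H →ₗ[ℝ] H where
  toFun v := ⟪x, v⟫ • x
  map_add' := by intros; simp [inner_add_right, add_smul]
  map_smul' := by intros; simp [inner_smul_right, mul_smul]


set_option linter.unusedSectionVars false
open Matrix

section Aux
variable {H : Type*} [NormedAddCommGroup H] [InnerProductSpace ℝ H] [FiniteDimensional ℝ H]

@[simp] lemma outer_apply (y v : H) : outer y v = ⟪y, v⟫ • y := rfl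

noncomputable def coordMat {m : ℕ} (xs : Fin m → H) :
    Matrix (Fin m) (Fin (Module.finrank ℝ H)) ℝ :=
  Matrix.of fun i k => ⟪xs i, stdOrthonormalBasis ℝ H k⟫

lemma gram_eq_coordMat_mul {m : ℕ} (xs : Fin m → H) :
    gram xs = coordMat xs * (coordMat xs)ᵀ := by
  ext i j
  simp only [_root_.gram, coordMat, Matrix.mul_apply, Matrix.transpose_apply, Matrix.of_apply]
  rw [← (stdOrthonormalBasis ℝ H).sum_inner_mul_inner (xs i) (xs j)]
  congr 1; ext k; rw [real_inner_comm (xs j)]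

lemma gram_posSemidef {m : ℕ} (xs : Fin m → H) : (gram xs).PosSemidef := by
  rw [gram_eq_coordMat_mul]
  have h : (coordMat xs)ᵀ = (coordMat xs)ᴴ := by
    ext i j; simp [Matrix.conjTranspose_apply]
  rw [h]
  exact Matrix.posSemidef_self_mul_conjTranspose _

lemma smul_posSemidef {m : ℕ} {G : Matrix (Fin m) (Fin m) ℝ} (hG : G.PosSemidef)
    {c : ℝ} (hc : 0 ≤ c) : (c • G).PosSemidef := by
  refine Matrix.posSemidef_iff_dotProduct_mulVec.mpr ⟨?_, ?_⟩
  · show (c • G)ᴴ = c • G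
    rw [Matrix.conjTranspose_smul, hG.1]; simp
  · intro v
    rw [Matrix.smul_mulVec, dotProduct_smul]
    exact mul_nonneg hc (hG.dotProduct_mulVec_nonneg v)

lemma det_pos_one_add {m : ℕ} (lam : ℝ) (hlam : 0 < lam) (xs : Fin m → H) :
    0 < (1 + lam⁻¹ • gram xs).det :=
  (Matrix.PosDef.add_posSemidef Matrix.PosDef.one
    (smul_posSemidef (gram_posSemidef xs) (inv_nonneg.2 hlam.le))).det_pos

end Aux

section Det
variable {H : Type*} [NormedAddCommGroup H] [InnerProductSpace ℝ H] [FiniteDimensional ℝ H]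
open Matrix

lemma det_lam_id_add_sum_outer {m : ℕ} (lam : ℝ) (hlam : lam ≠ 0) (xs : Fin m → H) :
    LinearMap.det (lam • (LinearMap.id : H →ₗ[ℝ] H) + ∑ i, outer (xs i))
      = lam ^ Module.finrank ℝ H * (1 + lam⁻¹ • gram xs).det := by
  classical
  set b := stdOrthonormalBasis ℝ H with hb
  set Φ := coordMat xs with hΦ
  have hM : LinearMap.toMatrix b.toBasis b.toBasis
        (lam • (LinearMap.id : H →ₗ[ℝ] H) + ∑ i, outer (xs i))
      = lam • (1 : Matrix (Fin (Module.finrank ℝ H)) (Fin (Module.finrank ℝ H)) ℝ)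
          + Φᵀ * Φ := by
    ext k l
    rw [LinearMap.toMatrix_apply, OrthonormalBasis.coe_toBasis,
      OrthonormalBasis.coe_toBasis_repr_apply, OrthonormalBasis.repr_apply_apply]
    have h2 : ⟪b k, b l⟫ = if k = l then (1:ℝ) else 0 := orthonormal_iff_ite.mp b.orthonormal k l
    simp only [LinearMap.add_apply, LinearMap.smul_apply, LinearMap.id_apply,
      LinearMap.coe_sum, Finset.sum_apply, outer_apply, inner_add_right, inner_sum,
      real_inner_smul_right, h2, Matrix.add_apply, Matrix.smul_apply, Matrix.one_apply,
      smul_eq_mul, Matrix.mul_apply, Matrix.transpose_apply, hΦ, coordMat, Matrix.of_apply]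
    congr 1
    refine Finset.sum_congr rfl fun i _ => ?_
    rw [real_inner_comm (b k)]
    ring
  rw [← LinearMap.det_toMatrix b.toBasis, hM]
  have h3 : lam • (1 : Matrix (Fin (Module.finrank ℝ H)) (Fin (Module.finrank ℝ H)) ℝ) + Φᵀ * Φ
      = lam • (1 + Φᵀ * (lam⁻¹ • Φ)) := by
    rw [smul_add, Matrix.mul_smul, smul_smul, mul_inv_cancel₀ hlam, one_smul]
  rw [h3, Matrix.det_smul, Fintype.card_fin, Matrix.det_one_add_mul_comm,
    Matrix.smul_mul, ← gram_eq_coordMat_mul]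

lemma det_id_add_comp_outer (W : H →ₗ[ℝ] H) (x : H) :
    LinearMap.det (LinearMap.id + W ∘ₗ outer x) = 1 + ⟪x, W x⟫ := by
  classical
  set b := stdOrthonormalBasis ℝ H with hb
  have hM : LinearMap.toMatrix b.toBasis b.toBasis (LinearMap.id + W ∘ₗ outer x)
      = 1 + Matrix.replicateCol (Fin 1) (fun k => ⟪b k, W x⟫)
          * Matrix.replicateRow (Fin 1) (fun l => ⟪x, b l⟫) := by
    ext k l
    rw [LinearMap.toMatrix_apply, OrthonormalBasis.coe_toBasis,
      OrthonormalBasis.coe_toBasis_repr_apply, OrthonormalBasis.repr_apply_apply]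
    have h2 : ⟪b k, b l⟫ = if k = l then (1:ℝ) else 0 := orthonormal_iff_ite.mp b.orthonormal k l
    simp only [LinearMap.add_apply, LinearMap.id_apply, LinearMap.comp_apply, outer_apply,
      _root_.map_smul, inner_add_right, real_inner_smul_right, h2,
      Matrix.add_apply, Matrix.one_apply, Matrix.mul_apply, Matrix.replicateCol_apply,
      Matrix.replicateRow_apply, Finset.univ_unique, Finset.sum_singleton]
    ring
  rw [← LinearMap.det_toMatrix b.toBasis, hM]
  erw [Matrix.det_one_add_replicateCol_mul_replicateRow (ι := Fin 1)]
  rw [dotProduct]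
  rw [← b.sum_inner_mul_inner x (W x)]

end Det

/-- **Lemma 4.** For `V = λI + ∑ᵢ xᵢ xᵢᵀ` (with inverse `W = V⁻¹`), the increment of
information gain is `Δγ(λ; x | x_1,…,x_n) = log (1 + ⟪x, V⁻¹ x⟫)`. -/
theorem incrGain_eq_log_one_add_inner_inv
    {H : Type*} [NormedAddCommGroup H] [InnerProductSpace ℝ H] [FiniteDimensional ℝ H]
    (lam : ℝ) (hlam : 0 < lam) (x : H) {n : ℕ} (xs : Fin n → H)
    (V W : H →ₗ[ℝ] H)
    (hV : V = lam • (LinearMap.id : H →ₗ[ℝ] H) + ∑ i, outer (xs i))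
    (hWV : W ∘ₗ V = LinearMap.id) (hVW : V ∘ₗ W = LinearMap.id) :
    incrGain lam x xs = Real.log (1 + ⟪x, W x⟫) := by
  have hlam' : lam ≠ 0 := hlam.ne'
  set d := Module.finrank ℝ H with hd
  set f : ℝ := (1 + lam⁻¹ • gram xs).det with hfdef
  set f' : ℝ := (1 + lam⁻¹ • gram (Fin.cons x xs)).det with hfdef'
  have hf : 0 < f := det_pos_one_add lam hlam xs
  have hf' : 0 < f' := det_pos_one_add lam hlam _
  have hdV : LinearMap.det V = lam ^ d * f := by
    rw [hV]; exact det_lam_id_add_sum_outer lam hlam' xs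
  have hsum : (∑ i : Fin (n+1), outer (Fin.cons x xs i))
      = outer x + ∑ i, outer (xs i) := by
    simp [Fin.sum_univ_succ]
  have hdV' : LinearMap.det (V + outer x) = lam ^ d * f' := by
    have h := det_lam_id_add_sum_outer (H := H) lam hlam' (Fin.cons x xs)
    rw [hsum] at h
    rw [← h, hV]
    congr 1
    abel
  have hfac : V + outer x = V ∘ₗ (LinearMap.id + W ∘ₗ outer x) := by
    rw [LinearMap.comp_add, LinearMap.comp_id, ← LinearMap.comp_assoc, hVW,
      LinearMap.id_comp]
  have hdet : lam ^ d * f' = lam ^ d * (f * (1 + ⟪x, W x⟫)) := by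
    rw [← hdV', hfac, LinearMap.det_comp, det_id_add_comp_outer, hdV]
    ring
  have hff : f' = f * (1 + ⟪x, W x⟫) := mul_left_cancel₀ (pow_pos hlam d).ne' hdet
  have hq : 1 + ⟪x, W x⟫ = f' / f := by rw [hff]; field_simp
  unfold incrGain infoGain
  rw [← hfdef, ← hfdef', hq, Real.log_div hf'.ne' hf.ne']
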